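/- For all real numbers m₁, m₂, the contour integral of f(z)/z over the positively oriented unit circle, where f(z) = (z − m₁)(z − m₂)(m₁·z + 1)(m₂·z + 1)/z², equals 2πi·((1 − m₁²)(1 − m₂²) − 2·m₁·m₂). -/

import Mathlib

open Complex Set

lemma circleIntegral_add' {f g : ℂ → ℂ} {c : ℂ} {R : ℝ} (hf : CircleIntegrable f c R)
    (hg : CircleIntegrable g c R) :
    (∮ z in C(c, R), (f z + g z)) = (∮ z in C(c, R), f z) + ∮ z in C(c, R), g z := by
  simp only [circleIntegral, smul_add, intervalIntegral.integral_add hf.out hg.out]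

lemma ci_zpow (a : ℂ) (n : ℤ) : CircleIntegrable (fun z : ℂ => a * z ^ n) 0 1 := by
  have h : CircleIntegrable (fun z : ℂ => (z - 0) ^ n) 0 1 := by
    rw [circleIntegrable_sub_zpow_iff]
    right; right
    simp
  have := (circleIntegrable_iff (f := fun z : ℂ => (z - 0) ^ n) (c := 0) 1).mp h
  rw [circleIntegrable_iff]
  simp only [sub_zero] at this ⊢
  simpa [mul_comm, mul_left_comm, mul_assoc] using (this.const_mul a)

lemma int_zpow (a : ℂ) (n : ℤ) (hn : n ≠ -1) :
    (∮ z in C(0, 1), a * z ^ n) = 0 := by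
  have := circleIntegral.integral_sub_zpow_of_ne hn 0 0 1
  simp only [sub_zero] at this
  rw [circleIntegral.integral_const_mul, this, mul_zero]

lemma int_inv : (∮ z in C(0, 1), (z : ℂ)⁻¹) = 2 * Real.pi * Complex.I := by
  have := circleIntegral.integral_sub_inv_of_mem_ball (c := (0:ℂ)) (w := 0) (R := 1)
    (by simp)
  simpa using this

/-- For all real `m₁, m₂`, the contour integral of `f(z)/z` over the positively oriented unit
circle, where `f(z) = (z − m₁)(z − m₂)(m₁z + 1)(m₂z + 1)/z²`, equals
`2πi((1 − m₁²)(1 − m₂²) − 2m₁m₂)`. -/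
theorem stmt_4 (m₁ m₂ : ℝ)
    (f : ℂ → ℂ)
    (hf : ∀ z : ℂ, f z =
      (z - (m₁ : ℂ)) * (z - (m₂ : ℂ)) * ((m₁ : ℂ) * z + 1) * ((m₂ : ℂ) * z + 1) / z ^ 2) :
    (∮ z in C(0, 1), f z / z) =
      2 * Real.pi * Complex.I *
        ((1 - (m₁ : ℂ) ^ 2) * (1 - (m₂ : ℂ) ^ 2) - 2 * (m₁ : ℂ) * (m₂ : ℂ)) := by
  set p : ℂ := (m₁ : ℂ) * m₂ with hp
  set s : ℂ := (m₁ : ℂ) + m₂ with hs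
  set C : ℂ := (1 - (m₁ : ℂ) ^ 2) * (1 - (m₂ : ℂ) ^ 2) - 2 * (m₁ : ℂ) * (m₂ : ℂ) with hC
  have key : ∀ z : ℂ, z ∈ Metric.sphere (0:ℂ) 1 →
      f z / z = p * z ^ (1:ℤ) + (s * (1 - p)) * z ^ (0:ℤ) + C * z⁻¹
        + (s * (p - 1)) * z ^ (-2:ℤ) + p * z ^ (-3:ℤ) := by
    intro z hz
    have hz0 : z ≠ 0 := by
      intro h
      simp [h] at hz
    rw [hf]
    have h1 : z ^ (1:ℤ) = z := by norm_num
    have h2 : z ^ (-2:ℤ) = (z^2)⁻¹ := by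
      rw [zpow_neg]; norm_cast
    have h3 : z ^ (-3:ℤ) = (z^3)⁻¹ := by
      rw [zpow_neg]; norm_cast
    rw [h1, h2, h3, zpow_zero]
    field_simp
    ring
  rw [circleIntegral.integral_congr (by norm_num) key]
  have i1 := ci_zpow p 1
  have i2 := ci_zpow (s * (1 - p)) 0
  have i3 : CircleIntegrable (fun z : ℂ => C * z⁻¹) 0 1 := by
    simpa [zpow_neg_one] using ci_zpow C (-1)
  have i4 := ci_zpow (s * (p - 1)) (-2)
  have i5 := ci_zpow p (-3)
  rw [circleIntegral_add' (f := fun z : ℂ => p * z ^ (1:ℤ) + (s * (1 - p)) * z ^ (0:ℤ) + C * z⁻¹ + (s * (p - 1)) * z ^ (-2:ℤ)) (g := fun z : ℂ => p * z ^ (-3:ℤ)) (by exact (((i1.add i2).add i3).add i4)) i5,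
    circleIntegral_add' (f := fun z : ℂ => p * z ^ (1:ℤ) + (s * (1 - p)) * z ^ (0:ℤ) + C * z⁻¹) (g := fun z : ℂ => (s * (p - 1)) * z ^ (-2:ℤ)) (by exact ((i1.add i2).add i3)) i4,
    circleIntegral_add' (f := fun z : ℂ => p * z ^ (1:ℤ) + (s * (1 - p)) * z ^ (0:ℤ)) (g := fun z : ℂ => C * z⁻¹) (by exact (i1.add i2)) i3,
    circleIntegral_add' i1 i2,
    int_zpow p 1 (by norm_num), int_zpow (s * (1 - p)) 0 (by norm_num),
    int_zpow (s * (p - 1)) (-2) (by norm_num), int_zpow p (-3) (by norm_num),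
    circleIntegral.integral_const_mul, int_inv]
  ring
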